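/- Let A be an unambiguous nondeterministic parity tree automaton, and suppose the pair (q,a) is productive. If δ₁ ≠ δ₂ are two transitions of A starting from (q,a), then the languages L_{δ₁} and L_{δ₂} are disjoint. -/
import Mathlib


open Filter Set

/-- An infinite binary tree over alphabet `A`. -/
abbrev Tree' (A : Type) := List Bool → A

/-- Subtree of `t` rooted at vertex `v`. -/
def subtreeAt {A : Type} (t : Tree' A) (v : List Bool) : Tree' A := fun w => t (v ++ w)

/-- Substitution `t[r/v]`: replace the subtree of `t` at `v` by `r`. -/
def substAt {A : Type} (t r : Tree' A) (v : List Bool) : Tree' A :=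
  fun w => if v <+: w then r (w.drop v.length) else t w

/-- A nondeterministic parity tree automaton. -/
structure NPA (Q A : Type) where
  q0 : Q
  Δ : Set (Q × Q × A × Q)
  Ω : Q → ℕ

/-- `ρ` is a run of `M` on `t`. `false` = left, `true` = right. -/
def NPA.IsRun {Q A : Type} (M : NPA Q A) (t : Tree' A) (ρ : Tree' Q) : Prop :=
  ∀ v : List Bool, (ρ v, ρ (v ++ [false]), t v, ρ (v ++ [true])) ∈ M.Δ

/-- Length-`n` prefix of an infinite branch, as a vertex. -/
def pref (b : ℕ → Bool) (n : ℕ) : List Bool := (List.range n).map b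

/-- `ρ` is an accepting run of `M` on `t`. -/
def NPA.Accepting {Q A : Type} (M : NPA Q A) (t : Tree' A) (ρ : Tree' Q) : Prop :=
  M.IsRun t ρ ∧
    ∀ b : ℕ → Bool, Even (Filter.limsup (fun n => M.Ω (ρ (pref b n))) Filter.atTop)

/-- Accepting run starting from state `q`. -/
def NPA.AcceptingFrom {Q A : Type} (M : NPA Q A) (q : Q) (t : Tree' A) (ρ : Tree' Q) : Prop :=
  M.Accepting t ρ ∧ ρ [] = q

/-- The language recognised by `M`. -/
def NPA.Lang {Q A : Type} (M : NPA Q A) : Set (Tree' A) :=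
  { t | ∃ ρ, M.AcceptingFrom M.q0 t ρ }

/-- `M` is unambiguous. -/
def NPA.Unambiguous {Q A : Type} (M : NPA Q A) : Prop :=
  ∀ (t : Tree' A) (ρ₁ ρ₂ : Tree' Q),
    M.AcceptingFrom M.q0 t ρ₁ → M.AcceptingFrom M.q0 t ρ₂ → ρ₁ = ρ₂

/-- `(q, a)` is productive. -/
def NPA.Productive {Q A : Type} (M : NPA Q A) (q : Q) (a : A) : Prop :=
  ∃ (t : Tree' A) (ρ : Tree' Q) (v : List Bool),
    M.AcceptingFrom M.q0 t ρ ∧ ρ v = q ∧ t v = a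

/-- The transition `δ` starts from the pair `(q, a)`. -/
def NPA.StartsFrom {Q A : Type} (M : NPA Q A) (δ : Q × Q × A × Q) (q : Q) (a : A) : Prop :=
  δ ∈ M.Δ ∧ δ.1 = q ∧ δ.2.2.1 = a

/-- `L_δ`: trees with an accepting run using transition `δ` at the root. -/
def NPA.Ldelta {Q A : Type} (M : NPA Q A) (δ : Q × Q × A × Q) : Set (Tree' A) :=
  { t | ∃ ρ : Tree' Q, M.Accepting t ρ ∧
      ρ [] = δ.1 ∧ ρ [false] = δ.2.1 ∧ t [] = δ.2.2.1 ∧ ρ [true] = δ.2.2.2 }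


lemma substAt_append {A : Type} (t₀ t : Tree' A) (v u : List Bool) :
    substAt t₀ t v (v ++ u) = t u := by
  simp [substAt, List.prefix_append]

lemma substAt_of_not_prefix {A : Type} (t₀ t : Tree' A) {v w : List Bool} (h : ¬ v <+: w) :
    substAt t₀ t v w = t₀ w := by
  simp [substAt, h]

lemma pref_succ (b : ℕ → Bool) (n : ℕ) : pref b (n+1) = pref b n ++ [b n] := by
  simp [pref, List.range_succ]

lemma pref_add (b : ℕ → Bool) (k n : ℕ) :
    pref b (k + n) = pref b k ++ pref (fun i => b (k + i)) n := by
  induction n with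
  | zero => simp [pref]
  | succ n ih => rw [← Nat.add_assoc, pref_succ, ih, pref_succ, List.append_assoc]

lemma prefix_eq_of_not_prefix {v w : List Bool} (hw : ¬ v <+: w) {bb : Bool}
    (hx : v <+: w ++ [bb]) : w ++ [bb] = v := by
  refine ((hx.eq_of_length_le ?_)).symm
  by_contra hlen
  push_neg at hlen
  simp only [List.length_append, List.length_singleton] at hlen
  exact hw (List.prefix_of_prefix_length_le hx (List.prefix_append w [bb])
    (by omega))

lemma subst_acc {Q A : Type} (M : NPA Q A) {t₀ t : Tree' A} {ρ₀ ρ : Tree' Q} {v : List Bool}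
    (h0 : M.Accepting t₀ ρ₀) (h : M.Accepting t ρ) (hv : ρ₀ v = ρ []) :
    M.Accepting (substAt t₀ t v) (substAt ρ₀ ρ v) := by
  have hchild : ∀ (w : List Bool) (bb : Bool), ¬ v <+: w →
      substAt ρ₀ ρ v (w ++ [bb]) = ρ₀ (w ++ [bb]) := by
    intro w bb hw
    by_cases hx : v <+: w ++ [bb]
    · have he : w ++ [bb] = v := prefix_eq_of_not_prefix hw hx
      rw [he]
      simp [substAt, List.drop_length, hv]
    · exact substAt_of_not_prefix _ _ hx
  constructor
  · intro w
    by_cases hw : v <+: w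
    · obtain ⟨u, rfl⟩ := hw
      have e3 : substAt ρ₀ ρ v (v ++ u ++ [false]) = ρ (u ++ [false]) := by
        rw [List.append_assoc]; exact substAt_append _ _ _ _
      have e4 : substAt ρ₀ ρ v (v ++ u ++ [true]) = ρ (u ++ [true]) := by
        rw [List.append_assoc]; exact substAt_append _ _ _ _
      rw [substAt_append, substAt_append, e3, e4]
      exact h.1 u
    · rw [substAt_of_not_prefix _ _ hw, substAt_of_not_prefix _ _ hw,
        hchild w false hw, hchild w true hw]
      exact h0.1 w
  · intro b
    by_cases hb : ∀ k (hk : k < v.length), b k = v[k]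
    · have hvb : pref b v.length = v := by
        apply List.ext_getElem (by simp [pref])
        intro k h1 h2
        simp only [pref, List.getElem_map, List.getElem_range]
        exact hb k h2
      have hsh : ∀ n, substAt ρ₀ ρ v (pref b (v.length + n))
          = ρ (pref (fun i => b (v.length + i)) n) := by
        intro n
        rw [pref_add, hvb, substAt_append]
      have key : (fun n => M.Ω (substAt ρ₀ ρ v (pref b (n + v.length))))
          = fun n => M.Ω (ρ (pref (fun i => b (v.length + i)) n)) := by
        funext n
        rw [Nat.add_comm, hsh]
      have := h.2 (fun i => b (v.length + i))
      rwa [← limsup_nat_add (fun n => M.Ω (substAt ρ₀ ρ v (pref b n))) v.length, key]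
    · push_neg at hb
      obtain ⟨k, hk, hne⟩ := hb
      have hnp : ∀ n, ¬ v <+: pref b n := by
        intro n hp
        have hkn : k < (pref b n).length := lt_of_lt_of_le hk hp.length_le
        have := hp.getElem hk
        simp only [pref, List.getElem_map, List.getElem_range] at this
        exact hne this.symm
      have key : (fun n => M.Ω (substAt ρ₀ ρ v (pref b n)))
          = fun n => M.Ω (ρ₀ (pref b n)) := by
        funext n
        rw [substAt_of_not_prefix _ _ (hnp n)]
      rw [key]
      exact h0.2 b

theorem stmt4 {Q A : Type} (M : NPA Q A) (hU : M.Unambiguous) (q : Q) (a : A)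
    (hprod : M.Productive q a) (δ₁ δ₂ : Q × Q × A × Q)
    (h1 : M.StartsFrom δ₁ q a) (h2 : M.StartsFrom δ₂ q a) (hne : δ₁ ≠ δ₂) :
    M.Ldelta δ₁ ∩ M.Ldelta δ₂ = ∅ := by
  rw [Set.eq_empty_iff_forall_notMem]
  intro t
  rintro ⟨⟨ρ₁, hρ₁, hr1, hl1, ha1, hR1⟩, ⟨ρ₂, hρ₂, hr2, hl2, ha2, hR2⟩⟩
  obtain ⟨t₀, ρ₀, v, ⟨hacc0, hroot0⟩, hv, ht0v⟩ := hprod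
  have hv1 : ρ₀ v = ρ₁ [] := by rw [hv, hr1, h1.2.1]
  have hv2 : ρ₀ v = ρ₂ [] := by rw [hv, hr2, h2.2.1]
  have A1 := subst_acc M hacc0 hρ₁ hv1
  have A2 := subst_acc M hacc0 hρ₂ hv2
  have hroot : ∀ ρ : Tree' Q, ρ₀ v = ρ [] → substAt ρ₀ ρ v [] = M.q0 := by
    intro ρ hρ
    by_cases hp : v <+: ([] : List Bool)
    · have : v = [] := List.prefix_nil.mp hp
      subst this
      simp [substAt, ← hρ, hroot0]
    · rw [substAt_of_not_prefix _ _ hp, hroot0]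
  have hEq : substAt ρ₀ ρ₁ v = substAt ρ₀ ρ₂ v :=
    hU _ _ _ ⟨A1, hroot ρ₁ hv1⟩ ⟨A2, hroot ρ₂ hv2⟩
  have hF : ρ₁ [false] = ρ₂ [false] := by
    have := congrFun hEq (v ++ [false])
    rwa [substAt_append, substAt_append] at this
  have hT : ρ₁ [true] = ρ₂ [true] := by
    have := congrFun hEq (v ++ [true])
    rwa [substAt_append, substAt_append] at this
  apply hne
  obtain ⟨a1, b1, c1, d1⟩ := δ₁
  obtain ⟨a2, b2, c2, d2⟩ := δ₂
  simp only at hr1 hl1 ha1 hR1 hr2 hl2 ha2 hR2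
  have e1 : a1 = a2 := by have := h1.2.1; have := h2.2.1; simp_all
  have e2 : b1 = b2 := by rw [← hl1, ← hl2, hF]
  have e3 : c1 = c2 := by rw [← ha1, ← ha2]
  have e4 : d1 = d2 := by rw [← hR1, ← hR2, hT]
  simp [e1, e2, e3, e4]
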